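/- Suppose G : E → ℝ satisfies 0 < c ≤ G(λ) ≤ C for all λ. Then for any two probability measures μ, ν on E, the normalized reweighting maps Ψ(μ)(A) = μ(G 1_A)/μ(G) satisfy ‖Ψ(μ) − Ψ(ν)‖_TV ≤ (C/c) ‖μ − ν‖_TV. -/

import Mathlib

open MeasureTheory

noncomputable def tvDist {E : Type*} [MeasurableSpace E] (μ ν : Measure E) : ℝ :=
  ⨆ (A : Set E) (_ : MeasurableSet A), |(μ A).toReal - (ν A).toReal|

noncomputable def boltzmannGibbs {E : Type*} [MeasurableSpace E]
    (G : E → ℝ) (μ : Measure E) : Measure E :=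
  (ENNReal.ofReal (∫ x, G x ∂μ))⁻¹ • μ.withDensity (fun x => ENNReal.ofReal (G x))

section Aux

variable {E : Type*} [MeasurableSpace E]

lemma abs_le_tvDist (μ ν : Measure E) [IsProbabilityMeasure μ] [IsProbabilityMeasure ν]
    {A : Set E} (hA : MeasurableSet A) :
    |(μ A).toReal - (ν A).toReal| ≤ tvDist μ ν := by
  have hbd : ∀ B : Set E,
      (⨆ (_ : MeasurableSet B), |(μ B).toReal - (ν B).toReal|) ≤ 1 := by
    intro B
    refine Real.iSup_le (fun hB => ?_) zero_le_one
    have h1 : (μ B).toReal ≤ 1 := by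
      simpa using ENNReal.toReal_mono (by simp) (prob_le_one (μ := μ) (s := B))
    have h2 : (ν B).toReal ≤ 1 := by
      simpa using ENNReal.toReal_mono (by simp) (prob_le_one (μ := ν) (s := B))
    rw [abs_sub_le_iff]
    constructor <;> nlinarith [ENNReal.toReal_nonneg (a := μ B), ENNReal.toReal_nonneg (a := ν B)]
  have hbdd : BddAbove (Set.range fun B : Set E =>
      ⨆ (_ : MeasurableSet B), |(μ B).toReal - (ν B).toReal|) := by
    refine ⟨1, ?_⟩; rintro x ⟨B, rfl⟩; exact hbd B
  calc |(μ A).toReal - (ν A).toReal|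
      = ⨆ (_ : MeasurableSet A), |(μ A).toReal - (ν A).toReal| := by
        haveI : Nonempty (MeasurableSet A) := ⟨hA⟩
        exact (ciSup_const).symm
    _ ≤ tvDist μ ν := le_ciSup hbdd A

lemma tvDist_nonneg (μ ν : Measure E) [IsProbabilityMeasure μ] [IsProbabilityMeasure ν] :
    0 ≤ tvDist μ ν :=
  le_trans (abs_nonneg _) (abs_le_tvDist μ ν MeasurableSet.empty)

lemma tvDist_comm (μ ν : Measure E) : tvDist μ ν = tvDist ν μ := by
  unfold tvDist
  congr 1; ext A; congr 1; ext hA; exact abs_sub_comm _ _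

end Aux

section Key

variable {E : Type*} [MeasurableSpace E]

lemma meas_le_integrable (μ : Measure E) [IsProbabilityMeasure μ]
    (g : E → ℝ) (K : ℝ) :
    IntegrableOn (fun t : ℝ => (μ {a | t ≤ g a}).toReal) (Set.Ioc 0 K) := by
  have hmeas : Measurable fun t : ℝ => (μ {a | t ≤ g a}).toReal := by
    refine Measurable.ennreal_toReal ?_
    exact Antitone.measurable (fun s t hst => measure_mono (fun a h => le_trans hst h))
  refine Integrable.mono' (integrable_const 1) hmeas.aestronglyMeasurable ?_
  refine Filter.Eventually.of_forall (fun t => ?_)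
  rw [Real.norm_eq_abs, abs_of_nonneg ENNReal.toReal_nonneg]
  simpa using ENNReal.toReal_mono (by simp) (prob_le_one (μ := μ) (s := {a | t ≤ g a}))

lemma integral_sub_le_tvDist (μ ν : Measure E) [IsProbabilityMeasure μ] [IsProbabilityMeasure ν]
    (g : E → ℝ) (hg : Measurable g) (K : ℝ) (hKnn : 0 ≤ K) (h0 : ∀ x, 0 ≤ g x) (h1 : ∀ x, g x ≤ K) :
    ∫ x, g x ∂μ - ∫ x, g x ∂ν ≤ K * tvDist μ ν := by
  have hgint : ∀ (ρ : Measure E) [IsProbabilityMeasure ρ], Integrable g ρ := by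
    intro ρ _
    refine Integrable.mono' (integrable_const K) hg.aestronglyMeasurable ?_
    exact Filter.Eventually.of_forall (fun x => by
      rw [Real.norm_eq_abs, abs_of_nonneg (h0 x)]; exact h1 x)
  have hμ : ∫ x, g x ∂μ = ∫ t in Set.Ioc 0 K, (μ {a | t ≤ g a}).toReal :=
    (hgint μ).integral_eq_integral_Ioc_meas_le (Filter.Eventually.of_forall h0)
      (Filter.Eventually.of_forall h1)
  have hν : ∫ x, g x ∂ν = ∫ t in Set.Ioc 0 K, (ν {a | t ≤ g a}).toReal :=
    (hgint ν).integral_eq_integral_Ioc_meas_le (Filter.Eventually.of_forall h0)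
      (Filter.Eventually.of_forall h1)
  rw [hμ, hν, ← integral_sub (meas_le_integrable μ g K) (meas_le_integrable ν g K)]
  have hmono : ∫ t in Set.Ioc 0 K, ((μ {a | t ≤ g a}).toReal - (ν {a | t ≤ g a}).toReal)
      ≤ ∫ _t in Set.Ioc 0 K, tvDist μ ν := by
    refine setIntegral_mono_on
      ((meas_le_integrable μ g K).sub (meas_le_integrable ν g K))
      (integrableOn_const (by simp) (by simp)) measurableSet_Ioc (fun t _ => ?_)
    exact le_trans (le_abs_self _)
      (abs_le_tvDist μ ν (hg measurableSet_Ici : MeasurableSet {a | t ≤ g a}))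
  refine le_trans hmono ?_
  rw [setIntegral_const]
  simp [Real.volume_Ioc, ENNReal.toReal_ofReal hKnn, max_eq_left hKnn]

end Key

section Main

variable {E : Type*} [MeasurableSpace E] (G : E → ℝ) (hGmeas : Measurable G)
  (c C : ℝ) (hc : 0 < c) (hG : ∀ x : E, c ≤ G x ∧ G x ≤ C)

include hGmeas hc hG

lemma G_integrable (μ : Measure E) [IsProbabilityMeasure μ] : Integrable G μ := by
  refine Integrable.mono' (integrable_const C) hGmeas.aestronglyMeasurable ?_
  exact Filter.Eventually.of_forall (fun x => by
    rw [Real.norm_eq_abs, abs_of_nonneg (le_of_lt (lt_of_lt_of_le hc (hG x).1))]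
    exact (hG x).2)

lemma G_integral_ge (μ : Measure E) [IsProbabilityMeasure μ] : c ≤ ∫ x, G x ∂μ := by
  have := integral_mono (integrable_const c) (G_integrable G hGmeas c C hc hG μ)
    (fun x => (hG x).1)
  simpa using this

lemma bg_apply (μ : Measure E) [IsProbabilityMeasure μ] {A : Set E} (hA : MeasurableSet A) :
    ((boltzmannGibbs G μ) A).toReal = (∫ x in A, G x ∂μ) / ∫ x, G x ∂μ := by
  have hGint := G_integrable G hGmeas c C hc hG μ
  have ha : (0:ℝ) < ∫ x, G x ∂μ := lt_of_lt_of_le hc (G_integral_ge G hGmeas c C hc hG μ)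
  have hp : (0:ℝ) ≤ ∫ x in A, G x ∂μ :=
    integral_nonneg (fun x => le_of_lt (lt_of_lt_of_le hc (hG x).1))
  have hlint : ∫⁻ x in A, ENNReal.ofReal (G x) ∂μ = ENNReal.ofReal (∫ x in A, G x ∂μ) :=
    (ofReal_integral_eq_lintegral_ofReal hGint.integrableOn
      (Filter.Eventually.of_forall (fun x => le_of_lt (lt_of_lt_of_le hc (hG x).1)))).symm
  rw [boltzmannGibbs, Measure.smul_apply, smul_eq_mul, withDensity_apply _ hA, hlint,
    ENNReal.toReal_mul, ENNReal.toReal_inv, ENNReal.toReal_ofReal hp,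
    ENNReal.toReal_ofReal (le_of_lt ha)]
  ring

lemma bg_one_sided (μ ν : Measure E) [IsProbabilityMeasure μ] [IsProbabilityMeasure ν]
    {A : Set E} (hA : MeasurableSet A) :
    ((boltzmannGibbs G μ) A).toReal - ((boltzmannGibbs G ν) A).toReal
      ≤ (C / c) * tvDist μ ν := by
  have hGnn : ∀ x, (0:ℝ) ≤ G x := fun x => le_of_lt (lt_of_lt_of_le hc (hG x).1)
  set a := ∫ x, G x ∂μ with ha_def
  set b := ∫ x, G x ∂ν with hb_def
  set p := ∫ x in A, G x ∂μ with hp_def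
  set q := ∫ x in A, G x ∂ν with hq_def
  have hca : c ≤ a := G_integral_ge G hGmeas c C hc hG μ
  have hcb : c ≤ b := G_integral_ge G hGmeas c C hc hG ν
  have ha : 0 < a := lt_of_lt_of_le hc hca
  have hb : 0 < b := lt_of_lt_of_le hc hcb
  have hp0 : 0 ≤ p := integral_nonneg (fun x => hGnn x)
  have hq0 : 0 ≤ q := integral_nonneg (fun x => hGnn x)
  have hpa : p ≤ a := setIntegral_le_integral (G_integrable G hGmeas c C hc hG μ)
    (Filter.Eventually.of_forall hGnn)
  set t := p / a with ht_def
  have ht0 : 0 ≤ t := div_nonneg hp0 (le_of_lt ha)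
  have ht1 : t ≤ 1 := (div_le_one ha).2 hpa
  have hne : Nonempty E := by
    by_contra h
    have h0 : μ Set.univ = 0 := by
      rw [Set.univ_eq_empty_iff.2 (not_nonempty_iff.1 h)]; exact measure_empty
    rw [measure_univ] at h0; exact one_ne_zero h0
  have hcC : c ≤ C := le_trans (hG (Classical.arbitrary E)).1 (hG _).2
  have hC0 : 0 < C := lt_of_lt_of_le hc hcC
  set g : E → ℝ := fun x => A.indicator G x + t * (C - G x) with hg_def
  have hgmeas : Measurable g := by
    exact (hGmeas.indicator hA).add ((measurable_const.sub hGmeas).const_mul t)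
  have hg0 : ∀ x, 0 ≤ g x := by
    intro x
    by_cases hx : x ∈ A
    · simp only [hg_def, Set.indicator_of_mem hx]
      nlinarith [(hG x).1, (hG x).2]
    · simp only [hg_def, Set.indicator_of_notMem hx]
      nlinarith [(hG x).1, (hG x).2]
  have hgC : ∀ x, g x ≤ C := by
    intro x
    by_cases hx : x ∈ A
    · simp only [hg_def, Set.indicator_of_mem hx]
      nlinarith [(hG x).1, (hG x).2]
    · simp only [hg_def, Set.indicator_of_notMem hx]
      nlinarith [(hG x).1, (hG x).2]
  have hGint : ∀ (ρ : Measure E) [IsProbabilityMeasure ρ], Integrable G ρ :=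
    fun ρ _ => G_integrable G hGmeas c C hc hG ρ
  have hgint : ∀ (ρ : Measure E) [IsProbabilityMeasure ρ],
      ∫ x, g x ∂ρ = (∫ x in A, G x ∂ρ) + t * (C - ∫ x, G x ∂ρ) := by
    intro ρ _
    have hint1 : Integrable (fun x => A.indicator G x) ρ := (hGint ρ).indicator hA
    have hint3 : Integrable (fun x => C - G x) ρ := (integrable_const C).sub (hGint ρ)
    have hint2 : Integrable (fun x => t * (C - G x)) ρ := hint3.const_mul t
    have e1 : ∫ x, g x ∂ρ = ∫ x, (A.indicator G x + t * (C - G x)) ∂ρ := rfl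
    rw [e1, integral_add hint1 hint2, integral_indicator hA, integral_const_mul,
      integral_sub (integrable_const C) (hGint ρ), integral_const]
    simp
  have hkey := integral_sub_le_tvDist μ ν g hgmeas C (le_of_lt hC0) hg0 hgC
  rw [hgint μ, hgint ν] at hkey
  have hta : t * a = p := div_mul_cancel₀ p (ne_of_gt ha)
  -- hkey : (p + t*(C-a)) - (q + t*(C-b)) ≤ C * tvDist μ ν, LHS = t*b - q
  have hkey2 : t * b - q ≤ C * tvDist μ ν := by nlinarith [hkey]
  rw [bg_apply G hGmeas c C hc hG μ hA, bg_apply G hGmeas c C hc hG ν hA]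
  have htv : 0 ≤ tvDist μ ν := tvDist_nonneg μ ν
  have h1 : (t * b - q) / b = p / a - q / b := by
    rw [sub_div, mul_div_assoc, div_self (ne_of_gt hb), mul_one, ht_def]
  rw [← h1]
  calc (t * b - q) / b ≤ (C * tvDist μ ν) / b :=
        (div_le_div_iff_of_pos_right hb).2 hkey2
    _ ≤ (C * tvDist μ ν) / c := by
        apply div_le_div_of_nonneg_left (by positivity) hc hcb
    _ = (C / c) * tvDist μ ν := by ring

end Main

theorem boltzmannGibbs_tv_stability
    {E : Type*} [MeasurableSpace E]
    (G : E → ℝ) (hGmeas : Measurable G)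
    (c C : ℝ) (hc : 0 < c) (hG : ∀ x : E, c ≤ G x ∧ G x ≤ C)
    (μ ν : Measure E) [IsProbabilityMeasure μ] [IsProbabilityMeasure ν] :
    tvDist (boltzmannGibbs G μ) (boltzmannGibbs G ν) ≤ (C / c) * tvDist μ ν := by
  have hne : Nonempty E := by
    by_contra h
    have h0 : μ Set.univ = 0 := by
      rw [Set.univ_eq_empty_iff.2 (not_nonempty_iff.1 h)]; exact measure_empty
    rw [measure_univ] at h0; exact one_ne_zero h0
  have hcC : c ≤ C := le_trans (hG (Classical.arbitrary E)).1 (hG _).2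
  have hrhs : 0 ≤ (C / c) * tvDist μ ν :=
    mul_nonneg (div_nonneg (le_trans hc.le hcC) hc.le) (tvDist_nonneg μ ν)
  refine Real.iSup_le (fun A => Real.iSup_le (fun hA => ?_) hrhs) hrhs
  rw [abs_sub_le_iff]
  refine ⟨bg_one_sided G hGmeas c C hc hG μ ν hA, ?_⟩
  rw [tvDist_comm μ ν]
  exact bg_one_sided G hGmeas c C hc hG ν μ hA
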